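/- Let $p \in [1,\infty)$. There exists a constant $C > 0$, depending only on $p$, such that for all $a, b \in \mathbb{R}$: $\Big| |a+b|^p - \sum_{k=0}^{\lfloor p \rfloor} \binom{p}{k}\, |a|^{p-k}\,(\operatorname{sgn} a)^k\, b^k \Big| \le C\,|b|^p$, where $\lfloor p \rfloor = \max\{m \in \mathbb{N} : m \le p\}$ and $\binom{p}{k} = \frac{\Gamma(p+1)}{k!\,\Gamma(p-k+1)}$. -/

import Mathlib

noncomputable def cc (q : ℝ) (k : ℕ) : ℝ := (∏ i ∈ Finset.range k, (q - i)) / k.factorial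

lemma cc_zero (q : ℝ) : cc q 0 = 1 := by simp [cc]

lemma cc_succ (q : ℝ) (i : ℕ) : cc q (i + 1) * (i + 1) = q * cc (q - 1) i := by
  have h1 : (∏ j ∈ Finset.range (i + 1), (q - j)) = (∏ j ∈ Finset.range i, (q - 1 - j)) * q := by
    rw [Finset.prod_range_succ']
    simp only [Nat.cast_zero, sub_zero]
    congr 1
    exact Finset.prod_congr rfl fun j _ => by push_cast; ring
  have h2 : ((i + 1).factorial : ℝ) = (i + 1) * i.factorial := by
    rw [Nat.factorial_succ]; push_cast; ring
  have hi : (i.factorial : ℝ) ≠ 0 := Nat.cast_ne_zero.mpr i.factorial_ne_zero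
  have hi1 : ((i : ℝ) + 1) ≠ 0 := by positivity
  unfold cc
  rw [h1, h2]
  field_simp

lemma gamma_prod (p : ℝ) (hp : 0 < p) :
    ∀ k : ℕ, (k : ℝ) ≤ p →
      Real.Gamma (p + 1) = (∏ i ∈ Finset.range k, (p - i)) * Real.Gamma (p - k + 1) := by
  intro k
  induction k with
  | zero => simp
  | succ k ih =>
    intro hk
    have hk' : (k : ℝ) ≤ p := by push_cast at hk ⊢; linarith
    have hne : p - k ≠ 0 := by push_cast at hk; intro h; rw [sub_eq_zero] at h; simp [h] at hk; linarith
    have : Real.Gamma (p - k + 1) = (p - k) * Real.Gamma (p - k) := Real.Gamma_add_one hne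
    rw [ih hk', this, Finset.prod_range_succ]
    have he : p - (↑k + 1) + 1 = p - ↑k := by ring
    push_cast
    rw [he]
    ring

lemma mvt_bound {g g' : ℝ → ℝ} {M t : ℝ} (hM : 0 ≤ M)
    (hderiv : ∀ s ∈ Set.Icc (-1 : ℝ) 1, HasDerivAt g (g' s) s)
    (hbound : ∀ s ∈ Set.Icc (-1 : ℝ) 1, |g' s| ≤ M)
    (hg0 : g 0 = 0) (ht : |t| ≤ 1) : |g t| ≤ M := by
  have ht' : t ∈ Set.Icc (-1 : ℝ) 1 := by
    rcases abs_le.mp ht with ⟨h1, h2⟩; exact ⟨h1, h2⟩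
  have h0 : (0 : ℝ) ∈ Set.Icc (-1 : ℝ) 1 := by constructor <;> norm_num
  have := (convex_Icc (-1 : ℝ) 1).norm_image_sub_le_of_norm_hasDerivWithin_le
    (fun s hs => (hderiv s hs).hasDerivWithinAt) (fun s hs => hbound s hs) h0 ht'
  rw [hg0, sub_zero, sub_zero] at this
  calc |g t| ≤ M * |t| := this
    _ ≤ M * 1 := by exact mul_le_mul_of_nonneg_left ht hM
    _ = M := mul_one M

lemma key : ∀ (n : ℕ) (q : ℝ), (n : ℝ) ≤ q → q < n + 1 → ∀ x t : ℝ, 2 ≤ x → |t| ≤ 1 →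
    |(x + t) ^ q - ∑ k ∈ Finset.range (n + 1), cc q k * (x ^ (q - (k : ℝ)) * t ^ k)|
      ≤ ((n : ℝ) + 1) ^ n := by
  intro n
  induction n with
  | zero =>
    intro q hq0 hq1 x t hx ht
    simp only [Nat.cast_zero, zero_add, pow_zero] at *
    have hsum : ∑ k ∈ Finset.range 1, cc q k * (x ^ (q - (k : ℝ)) * t ^ k) = x ^ q := by
      simp [cc_zero]
    rw [hsum]
    apply mvt_bound (g := fun s => (x + s) ^ q - x ^ q)
      (g' := fun s => q * (x + s) ^ (q - 1)) zero_le_one ?_ ?_ (by simp) ht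
    · intro s hs
      have hxs : (0 : ℝ) < x + s := by have := hs.1; linarith
      have h := (((hasDerivAt_id s).const_add x).rpow_const (p := q) (Or.inl hxs.ne')).sub_const
        (x ^ q)
      simpa using h
    · intro s hs
      have hxs : (1 : ℝ) ≤ x + s := by have := hs.1; linarith
      have h1 : (x + s) ^ (q - 1) ≤ 1 :=
        Real.rpow_le_one_of_one_le_of_nonpos hxs (by linarith)
      have h2 : (0 : ℝ) ≤ (x + s) ^ (q - 1) := Real.rpow_nonneg (by linarith) _
      simp only [abs_mul, abs_of_nonneg hq0, abs_of_nonneg h2]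
      calc q * (x + s) ^ (q - 1) ≤ 1 * 1 :=
            mul_le_mul (by linarith) h1 h2 zero_le_one
        _ = 1 := by norm_num
  | succ m ih =>
    intro q hq0 hq1 x t hx ht
    have hq0' : (m : ℝ) ≤ q - 1 := by push_cast at hq0 ⊢; linarith
    have hq1' : q - 1 < m + 1 := by push_cast at hq1 ⊢; linarith
    have hqpos : (0 : ℝ) ≤ q := le_trans (by positivity) hq0
    apply mvt_bound
      (g := fun s => (x + s) ^ q - ∑ k ∈ Finset.range (m + 2), cc q k * (x ^ (q - (k : ℝ)) * s ^ k))
      (g' := fun s => q * ((x + s) ^ (q - 1) -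
        ∑ j ∈ Finset.range (m + 1), cc (q - 1) j * (x ^ (q - 1 - (j : ℝ)) * s ^ j)))
      (by positivity) ?_ ?_ ?_ ht
    · intro s hs
      have hxs : (0 : ℝ) < x + s := by have := hs.1; linarith
      have h1 : HasDerivAt (fun s => (x + s) ^ q) (q * (x + s) ^ (q - 1)) s := by
        have h := ((hasDerivAt_id s).const_add x).rpow_const (p := q) (Or.inl hxs.ne')
        simpa using h
      have h2 : HasDerivAt
          (fun s : ℝ => ∑ k ∈ Finset.range (m + 2), cc q k * (x ^ (q - (k : ℝ)) * s ^ k))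
          (∑ k ∈ Finset.range (m + 2), cc q k * (x ^ (q - (k : ℝ)) * ((k : ℝ) * s ^ (k - 1)))) s := by
        apply HasDerivAt.fun_sum
        intro k _
        exact ((hasDerivAt_pow k s).const_mul (x ^ (q - (k : ℝ)))).const_mul (cc q k)
      have h3 := HasDerivAt.fun_sub h1 h2
      refine h3.congr_deriv ?_
      have hre : ∑ k ∈ Finset.range (m + 2), cc q k * (x ^ (q - (k : ℝ)) * ((k : ℝ) * s ^ (k - 1)))
          = q * ∑ j ∈ Finset.range (m + 1), cc (q - 1) j * (x ^ (q - 1 - (j : ℝ)) * s ^ j) := by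
        rw [Finset.sum_range_succ', Finset.mul_sum]
        simp only [Nat.cast_zero, mul_zero, zero_mul, add_zero]
        apply Finset.sum_congr rfl
        intro j _
        have hexp : q - ((j : ℝ) + 1) = q - 1 - (j : ℝ) := by ring
        have hc := cc_succ q j
        push_cast
        rw [hexp]
        linear_combination (x ^ (q - 1 - (j : ℝ)) * s ^ j) * hc
      rw [hre]; ring
    · intro s hs
      have hss : |s| ≤ 1 := abs_le.mpr ⟨hs.1, hs.2⟩
      have hIH := ih (q - 1) hq0' hq1' x s hx hss
      have hq2 : q ≤ (m : ℝ) + 2 := by push_cast at hq1; linarith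
      rw [abs_mul, abs_of_nonneg hqpos]
      have h1 : q * |(x + s) ^ (q - 1) -
            ∑ j ∈ Finset.range (m + 1), cc (q - 1) j * (x ^ (q - 1 - (j : ℝ)) * s ^ j)|
          ≤ ((m : ℝ) + 2) * (((m : ℝ) + 1) ^ m) :=
        mul_le_mul hq2 hIH (abs_nonneg _) (by positivity)
      refine h1.trans ?_
      have h2 : ((m : ℝ) + 1) ^ m ≤ ((m : ℝ) + 2) ^ m :=
        pow_le_pow_left₀ (by positivity) (by linarith) m
      have h3 : ((m : ℝ) + 2) * (((m : ℝ) + 1) ^ m) ≤ ((m : ℝ) + 2) ^ (m + 1) := by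
        rw [pow_succ]
        nlinarith [pow_nonneg (by positivity : (0 : ℝ) ≤ (m : ℝ) + 2) m]
      refine h3.trans (le_of_eq ?_)
      push_cast
      ring
    · have h0 : ∑ k ∈ Finset.range (m + 2), cc q k * (x ^ (q - (k : ℝ)) * (0 : ℝ) ^ k) = x ^ q := by
        rw [Finset.sum_eq_single 0]
        · simp [cc_zero]
        · intro b _ hb; simp [zero_pow hb]
        · intro h; simp at h
      simp only [h0, add_zero, sub_self]

noncomputable def FF (p : ℝ) (n : ℕ) (a b : ℝ) : ℝ :=
  |a + b| ^ p - ∑ k ∈ Finset.range (n + 1),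
    cc p k * (|a| ^ (p - (k : ℝ)) * Real.sign a ^ k * b ^ k)

lemma abs_sign_le (a : ℝ) : |Real.sign a| ≤ 1 := by
  rcases lt_trichotomy a 0 with h | h | h
  · rw [Real.sign_of_neg h]; norm_num
  · rw [h, Real.sign_zero]; norm_num
  · rw [Real.sign_of_pos h]; norm_num

lemma sign_mul_pos (t a : ℝ) (ht : 0 < t) : Real.sign (t * a) = Real.sign a := by
  rcases lt_trichotomy a 0 with h | h | h
  · rw [Real.sign_of_neg h, Real.sign_of_neg (mul_neg_of_pos_of_neg ht h)]
  · rw [h, mul_zero]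
  · rw [Real.sign_of_pos h, Real.sign_of_pos (mul_pos ht h)]

lemma FF_hom (p : ℝ) (n : ℕ) (a b t : ℝ) (ht : 0 < t) :
    FF p n (t * a) (t * b) = t ^ p * FF p n a b := by
  unfold FF
  have habs : |t * a + t * b| ^ p = t ^ p * |a + b| ^ p := by
    rw [← mul_add, abs_mul, abs_of_pos ht, Real.mul_rpow ht.le (abs_nonneg _)]
  rw [habs, mul_sub, Finset.mul_sum]
  congr 1
  apply Finset.sum_congr rfl
  intro k _
  have e1 : t ^ (p - (k : ℝ)) * t ^ k = t ^ p := by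
    rw [← Real.rpow_natCast t k, ← Real.rpow_add ht]
    ring_nf
  rw [sign_mul_pos t a ht, abs_mul, abs_of_pos ht,
    Real.mul_rpow ht.le (abs_nonneg a), mul_pow]
  linear_combination (cc p k * |a| ^ (p - (k : ℝ)) * Real.sign a ^ k * b ^ k) * e1

lemma core (p : ℝ) (hp : 1 ≤ p) (n : ℕ) (hn : (n : ℝ) ≤ p) (hn1 : p < n + 1)
    (a t : ℝ) (ht : |t| ≤ 1) :
    |FF p n a t| ≤ 3 ^ p + (∑ k ∈ Finset.range (n + 1), |cc p k|) * 2 ^ p + ((n : ℝ) + 1) ^ n := by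
  have hp0 : (0 : ℝ) < p := lt_of_lt_of_le one_pos hp
  have hpow_nn : (0 : ℝ) ≤ ((n : ℝ) + 1) ^ n := by positivity
  rcases le_or_gt |a| 2 with ha | ha
  · -- crude bound
    have h1 : |FF p n a t| ≤ |a + t| ^ p +
        |∑ k ∈ Finset.range (n + 1), cc p k * (|a| ^ (p - (k : ℝ)) * Real.sign a ^ k * t ^ k)| := by
      unfold FF
      refine (abs_sub _ _).trans ?_
      rw [abs_of_nonneg (Real.rpow_nonneg (abs_nonneg _) p)]
    have h2 : |a + t| ^ p ≤ 3 ^ p := by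
      apply Real.rpow_le_rpow (abs_nonneg _) _ hp0.le
      calc |a + t| ≤ |a| + |t| := abs_add_le a t
        _ ≤ 3 := by linarith
    have h3 : |∑ k ∈ Finset.range (n + 1), cc p k * (|a| ^ (p - (k : ℝ)) * Real.sign a ^ k * t ^ k)|
        ≤ (∑ k ∈ Finset.range (n + 1), |cc p k|) * 2 ^ p := by
      calc _ ≤ ∑ k ∈ Finset.range (n + 1),
            |cc p k * (|a| ^ (p - (k : ℝ)) * Real.sign a ^ k * t ^ k)| :=
            Finset.abs_sum_le_sum_abs _ _
        _ ≤ ∑ k ∈ Finset.range (n + 1), |cc p k| * 2 ^ p := by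
            apply Finset.sum_le_sum
            intro k hk
            have hkn : (k : ℝ) ≤ (n : ℝ) :=
              Nat.cast_le.mpr (Nat.lt_succ_iff.mp (Finset.mem_range.mp hk))
            have hexp : (0 : ℝ) ≤ p - (k : ℝ) := by linarith
            have hA : |a| ^ (p - (k : ℝ)) ≤ 2 ^ p := by
              calc |a| ^ (p - (k : ℝ)) ≤ 2 ^ (p - (k : ℝ)) :=
                    Real.rpow_le_rpow (abs_nonneg a) ha hexp
                _ ≤ 2 ^ p := Real.rpow_le_rpow_of_exponent_le one_le_two (by linarith)
            have hS : |Real.sign a ^ k| ≤ 1 := by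
              rw [abs_pow]; exact pow_le_one₀ (abs_nonneg _) (abs_sign_le a)
            have hT : |t ^ k| ≤ 1 := by
              rw [abs_pow]; exact pow_le_one₀ (abs_nonneg _) ht
            rw [abs_mul, abs_mul, abs_mul,
              abs_of_nonneg (Real.rpow_nonneg (abs_nonneg a) _)]
            calc |cc p k| * (|a| ^ (p - (k : ℝ)) * |Real.sign a ^ k| * |t ^ k|)
                ≤ |cc p k| * ((2 ^ p) * 1 * 1) := by
                  gcongr <;> first | exact abs_nonneg _ | positivity
              _ = |cc p k| * 2 ^ p := by ring
        _ = (∑ k ∈ Finset.range (n + 1), |cc p k|) * 2 ^ p := by rw [Finset.sum_mul]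
    linarith
  · rcases lt_abs.mp ha with ha2 | ha2
    · -- a > 2
      have ha0 : (0 : ℝ) < a := by linarith
      have hat : 0 < a + t := by
        have := abs_le.mp ht; linarith
      have hFF : FF p n a t = (a + t) ^ p -
          ∑ k ∈ Finset.range (n + 1), cc p k * (a ^ (p - (k : ℝ)) * t ^ k) := by
        unfold FF
        rw [abs_of_pos hat, abs_of_pos ha0, Real.sign_of_pos ha0]
        congr 1
        exact Finset.sum_congr rfl fun k _ => by rw [one_pow, mul_one]
      rw [hFF]
      have := key n p hn (by exact_mod_cast hn1) a t ha2.le ht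
      have h3p : (0 : ℝ) ≤ 3 ^ p := by positivity
      have hsum : (0 : ℝ) ≤ (∑ k ∈ Finset.range (n + 1), |cc p k|) * 2 ^ p := by positivity
      linarith
    · -- a < -2
      have ha0 : a < 0 := by linarith
      have hat : a + t < 0 := by have := abs_le.mp ht; linarith
      have hFF : FF p n a t = (-a + -t) ^ p -
          ∑ k ∈ Finset.range (n + 1), cc p k * ((-a) ^ (p - (k : ℝ)) * (-t) ^ k) := by
        unfold FF
        rw [abs_of_neg hat, abs_of_neg ha0, Real.sign_of_neg ha0]
        have h1 : -(a + t) = -a + -t := by ring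
        rw [h1]
        congr 1
        apply Finset.sum_congr rfl
        intro k _
        have : (-t) ^ k = (-1 : ℝ) ^ k * t ^ k := by rw [neg_pow]
        rw [this]; ring
      rw [hFF]
      have := key n p hn (by exact_mod_cast hn1) (-a) (-t) (by linarith) (by rwa [abs_neg])
      have h3p : (0 : ℝ) ≤ 3 ^ p := by positivity
      have hsum : (0 : ℝ) ≤ (∑ k ∈ Finset.range (n + 1), |cc p k|) * 2 ^ p := by positivity
      linarith



/-- Taylor-type expansion with binomial coefficients: for `p ∈ [1,∞)`
there is `C = C(p) > 0` with
`| |a+b|^p - ∑_{k=0}^{⌊p⌋} bin(p,k) |a|^{p-k} (sgn a)^k b^k | ≤ C |b|^p`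
for all `a, b ∈ ℝ`, where `bin(p,k) = Γ(p+1)/(k! Γ(p-k+1))`. -/
theorem stmt_13 (p : ℝ) (hp : 1 ≤ p) :
    ∃ C : ℝ, 0 < C ∧ ∀ a b : ℝ,
      |(|a + b| ^ p - ∑ k ∈ Finset.range (⌊p⌋₊ + 1),
          Real.Gamma (p + 1) / ((k.factorial : ℝ) * Real.Gamma (p - (k : ℝ) + 1)) *
            (|a| ^ (p - (k : ℝ)) * Real.sign a ^ k * b ^ k))| ≤ C * |b| ^ p := by
  have hp0 : (0 : ℝ) < p := lt_of_lt_of_le one_pos hp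
  set n : ℕ := ⌊p⌋₊ with hn_def
  have hn : (n : ℝ) ≤ p := Nat.floor_le hp0.le
  have hn1 : p < n + 1 := Nat.lt_floor_add_one p
  have hcoef : ∀ k ∈ Finset.range (n + 1),
      Real.Gamma (p + 1) / ((k.factorial : ℝ) * Real.Gamma (p - (k : ℝ) + 1)) = cc p k := by
    intro k hk
    have hk' : (k : ℝ) ≤ p :=
      le_trans (Nat.cast_le.mpr (Nat.lt_succ_iff.mp (Finset.mem_range.mp hk))) hn
    have hΓpos : 0 < Real.Gamma (p - (k : ℝ) + 1) := Real.Gamma_pos_of_pos (by linarith)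
    rw [gamma_prod p hp0 k hk', cc]
    rw [mul_comm ((k.factorial : ℝ)) (Real.Gamma (p - (k : ℝ) + 1)),
      mul_comm (∏ i ∈ Finset.range k, (p - (i : ℝ))) (Real.Gamma (p - (k : ℝ) + 1)),
      mul_div_mul_left _ _ hΓpos.ne']
  set C : ℝ := 3 ^ p + (∑ k ∈ Finset.range (n + 1), |cc p k|) * 2 ^ p + ((n : ℝ) + 1) ^ n + 1
    with hC_def
  have hCpos : 0 < C := by
    have h1 : (0 : ℝ) ≤ 3 ^ p := by positivity
    have h2 : (0 : ℝ) ≤ (∑ k ∈ Finset.range (n + 1), |cc p k|) * 2 ^ p := by positivity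
    have h3 : (0 : ℝ) ≤ ((n : ℝ) + 1) ^ n := by positivity
    rw [hC_def]; linarith
  refine ⟨C, hCpos, ?_⟩
  intro a b
  have hrw : ∀ a b : ℝ, (∑ k ∈ Finset.range (n + 1),
      Real.Gamma (p + 1) / ((k.factorial : ℝ) * Real.Gamma (p - (k : ℝ) + 1)) *
        (|a| ^ (p - (k : ℝ)) * Real.sign a ^ k * b ^ k))
      = ∑ k ∈ Finset.range (n + 1), cc p k * (|a| ^ (p - (k : ℝ)) * Real.sign a ^ k * b ^ k) :=
    fun a b => Finset.sum_congr rfl fun k hk => by rw [hcoef k hk]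
  rw [hrw]
  show |FF p n a b| ≤ C * |b| ^ p
  rcases eq_or_ne b 0 with hb | hb
  · subst hb
    have hFF0 : FF p n a 0 = 0 := by
      unfold FF
      have h0 : ∑ k ∈ Finset.range (n + 1),
          cc p k * (|a| ^ (p - (k : ℝ)) * Real.sign a ^ k * (0 : ℝ) ^ k) = |a| ^ p := by
        rw [Finset.sum_eq_single 0]
        · simp [cc_zero]
        · intro b _ hb; simp [zero_pow hb]
        · intro h; simp at h
      rw [h0, add_zero, sub_self]
    rw [hFF0, abs_zero, Real.zero_rpow hp0.ne', mul_zero]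
  · have hb0 : 0 < |b| := abs_pos.mpr hb
    have e1 : |b| * (a / |b|) = a := by field_simp
    have e2 : |b| * (b / |b|) = b := by field_simp
    have hHom := FF_hom p n (a / |b|) (b / |b|) |b| hb0
    rw [e1, e2] at hHom
    have habs1 : |b / (|b|)| ≤ 1 := by
      rw [abs_div, abs_abs, div_self hb0.ne']
    have hcore := core p hp n hn (by exact_mod_cast hn1) (a / |b|) (b / |b|) habs1
    have hbp : (0 : ℝ) ≤ |b| ^ p := Real.rpow_nonneg (abs_nonneg b) p
    calc |FF p n a b| = |b| ^ p * |FF p n (a / |b|) (b / |b|)| := by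
          rw [hHom, abs_mul, abs_of_nonneg hbp]
      _ ≤ |b| ^ p * C := by
          apply mul_le_mul_of_nonneg_left _ hbp
          rw [hC_def]; linarith
      _ = C * |b| ^ p := mul_comm _ _
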